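/- Let K be an algebraically closed field of characteristic zero and ρ: G → GL(V) a finite-dimensional representation such that for every finite-index subgroup G' ⊆ G the restriction ρ|_{G'} is semisimple with all simple constituents having finite-order determinant. Then the identity component of the Zariski closure of ρ(G) in GL(V) is a semisimple algebraic group. -/

import Mathlib

section Preamble

variable (K : Type*) [Field K] (V : Type*) [AddCommGroup V] [Module K V]

/-- The algebra of polynomial functions on `End(V) × End(V)` (recording an endomorphism
together with its inverse), i.e. the subalgebra of functions generated by linear
functionals.  Zero loci of such functions are the Zariski-closed subsets of `GL(V)`. -/
def endPairPolynomials : Subalgebra K (((V →ₗ[K] V) × (V →ₗ[K] V)) → K) :=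
  Algebra.adjoin K (Set.range fun φ : ((V →ₗ[K] V) × (V →ₗ[K] V)) →ₗ[K] K => (φ : _ → K))

variable {K V}

/-- A subset of `GL(V)` is Zariski closed if it is the zero locus of a set of polynomial
functions in the matrix entries of `g` and `g⁻¹`. -/
def IsZarClosed (C : Set (V ≃ₗ[K] V)) : Prop :=
  ∃ T : Set (((V →ₗ[K] V) × (V →ₗ[K] V)) → K),
    (∀ f ∈ T, f ∈ endPairPolynomials K V) ∧
    C = {g : V ≃ₗ[K] V | ∀ f ∈ T,
      f ((g : V →ₗ[K] V), ((g⁻¹ : V ≃ₗ[K] V) : V →ₗ[K] V)) = 0}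

/-- The Zariski closure of a subset of `GL(V)` as an algebraic subgroup: the smallest
Zariski-closed subgroup containing it. -/
def zarSubgroupClosure (S : Set (V ≃ₗ[K] V)) : Subgroup (V ≃ₗ[K] V) :=
  ⨅ H ∈ {H : Subgroup (V ≃ₗ[K] V) | S ⊆ (H : Set (V ≃ₗ[K] V)) ∧
    IsZarClosed (H : Set (V ≃ₗ[K] V))}, H

/-- The Zariski closure `Mo(ρ)` of the image of a representation `ρ : G → GL(V)`. -/
def monodromyGroup {G : Type*} [Group G] (ρ : G →* (V ≃ₗ[K] V)) :
    Subgroup (V ≃ₗ[K] V) :=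
  zarSubgroupClosure (Set.range ρ)

/-- The identity component of an algebraic subgroup of `GL(V)`: the smallest
Zariski-closed finite-index subgroup. -/
def identityComponent (M : Subgroup (V ≃ₗ[K] V)) : Subgroup (V ≃ₗ[K] V) :=
  ⨅ H ∈ {H : Subgroup (V ≃ₗ[K] V) | H ≤ M ∧ IsZarClosed (H : Set (V ≃ₗ[K] V)) ∧
    (H.subgroupOf M).FiniteIndex}, H

/-- A connected algebraic subgroup of `GL(V)`. -/
def IsConnectedAlgGroup (M : Subgroup (V ≃ₗ[K] V)) : Prop :=
  IsZarClosed (M : Set (V ≃ₗ[K] V)) ∧ identityComponent M = M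

/-- A (connected) semisimple algebraic subgroup of `GL(V)`: a connected Zariski-closed
subgroup with no nontrivial Zariski-closed connected normal abelian subgroup. -/
def IsSemisimpleAlgGroup (M : Subgroup (V ≃ₗ[K] V)) : Prop :=
  IsConnectedAlgGroup M ∧
  ∀ W : Subgroup (V ≃ₗ[K] V), W ≤ M → IsZarClosed (W : Set (V ≃ₗ[K] V)) →
    identityComponent W = W →
    (∀ g ∈ M, ∀ w ∈ W, g * w * g⁻¹ ∈ W) →
    (∀ a ∈ W, ∀ b ∈ W, a * b = b * a) → W = ⊥

variable {G : Type*} [Group G]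

/-- A submodule invariant under the action of a subgroup `G' ⊆ G` via `ρ`. -/
def IsInvariantOn (ρ : G →* (V ≃ₗ[K] V)) (G' : Subgroup G) (p : Submodule K V) : Prop :=
  ∀ g ∈ G', ∀ v ∈ p, ρ g v ∈ p

/-- The restriction `ρ|_{G'}` is semisimple: every invariant submodule has an invariant
complement. -/
def IsSemisimpleOn (ρ : G →* (V ≃ₗ[K] V)) (G' : Subgroup G) : Prop :=
  ∀ p : Submodule K V, IsInvariantOn ρ G' p →
    ∃ q : Submodule K V, IsInvariantOn ρ G' q ∧ IsCompl p q

/-- `p` is a simple constituent for the action of `G'` via `ρ`. -/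
def IsSimpleOn (ρ : G →* (V ≃ₗ[K] V)) (G' : Subgroup G) (p : Submodule K V) : Prop :=
  IsInvariantOn ρ G' p ∧ p ≠ ⊥ ∧
  ∀ q ≤ p, IsInvariantOn ρ G' q → q = ⊥ ∨ q = p

/-- The determinant character of the action of `G'` on the invariant submodule `p`
has finite order. -/
def HasFiniteDetOn (ρ : G →* (V ≃ₗ[K] V)) (G' : Subgroup G) (p : Submodule K V) : Prop :=
  ∃ m : ℕ, 0 < m ∧ ∀ g ∈ G', ∀ h : ∀ v ∈ p, ρ g v ∈ p,
    (LinearMap.det ((ρ g : V →ₗ[K] V).restrict h)) ^ m = 1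

/-- The restriction `ρ|_{G'}` is admissible: it is semisimple and all its simple
constituents have finite-order determinant. -/
def IsAdmissibleOn (ρ : G →* (V ≃ₗ[K] V)) (G' : Subgroup G) : Prop :=
  IsSemisimpleOn ρ G' ∧ ∀ p : Submodule K V, IsSimpleOn ρ G' p → HasFiniteDetOn ρ G' p

end Preamble

/-! ### Auxiliary machinery -/

namespace SSM

variable {K : Type*} [Field K] {V : Type*} [AddCommGroup V] [Module K V]

/-- The pair map `g ↦ (g, g⁻¹)`. -/
def jmap (g : V ≃ₗ[K] V) : (V →ₗ[K] V) × (V →ₗ[K] V) :=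
  ((g : V →ₗ[K] V), ((g⁻¹ : V ≃ₗ[K] V) : V →ₗ[K] V))

theorem lin_mem (φ : ((V →ₗ[K] V) × (V →ₗ[K] V)) →ₗ[K] K) :
    ⇑φ ∈ endPairPolynomials K V :=
  Algebra.subset_adjoin ⟨φ, rfl⟩

theorem const_mem (c : K) :
    (fun _ : ((V →ₗ[K] V) × (V →ₗ[K] V)) => c) ∈ endPairPolynomials K V :=
  (endPairPolynomials K V).algebraMap_mem c

theorem comp_lin_mem {f : ((V →ₗ[K] V) × (V →ₗ[K] V)) → K}
    (hf : f ∈ endPairPolynomials K V)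
    (L : ((V →ₗ[K] V) × (V →ₗ[K] V)) →ₗ[K] ((V →ₗ[K] V) × (V →ₗ[K] V))) :
    (fun x => f (L x)) ∈ endPairPolynomials K V := by
  induction hf using Algebra.adjoin_induction with
  | mem x hx =>
      obtain ⟨φ, rfl⟩ := hx
      exact lin_mem (φ.comp L)
  | algebraMap r => exact const_mem r
  | add x y hx hy hx' hy' => exact Subalgebra.add_mem _ hx' hy'
  | mul x y hx hy hx' hy' => exact Subalgebra.mul_mem _ hx' hy'

/-- Intersections of closed sets are closed. -/
theorem IsZarClosed.iInter {ι : Sort*} {C : ι → Set (V ≃ₗ[K] V)}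
    (h : ∀ i, IsZarClosed (C i)) : IsZarClosed (⋂ i, C i) := by
  choose T hT hC using h
  refine ⟨⋃ i, T i, ?_, ?_⟩
  · rintro f hf
    obtain ⟨i, hi⟩ := Set.mem_iUnion.mp hf
    exact hT i f hi
  · ext g
    simp only [Set.mem_iInter, Set.mem_setOf_eq, Set.mem_iUnion]
    constructor
    · rintro hg f ⟨i, hi⟩
      have := hC i ▸ hg i
      exact this f hi
    · intro hg i
      rw [hC i]
      exact fun f hf => hg f ⟨i, hf⟩

theorem IsZarClosed.inter {C D : Set (V ≃ₗ[K] V)} (hC : IsZarClosed C) (hD : IsZarClosed D) :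
    IsZarClosed (C ∩ D) := by
  have := IsZarClosed.iInter (C := fun b : Bool => if b then C else D)
    (fun b => by cases b <;> simpa)
  convert this using 1
  ext g; simp [Bool.forall_bool, and_comm]

/-- Finite unions of closed sets are closed. -/
theorem IsZarClosed.iUnion_finite {ι : Type*} [Finite ι] {C : ι → Set (V ≃ₗ[K] V)}
    (h : ∀ i, IsZarClosed (C i)) : IsZarClosed (⋃ i, C i) := by
  haveI := Fintype.ofFinite ι
  choose T hT hC using h
  refine ⟨{f | ∃ c : ι → (((V →ₗ[K] V) × (V →ₗ[K] V)) → K), (∀ i, c i ∈ T i) ∧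
      f = fun x => ∏ i, c i x}, ?_, ?_⟩
  · rintro f ⟨c, hc, rfl⟩
    have : (fun x => ∏ i, c i x) = ∏ i, c i := by
      ext x; simp
    rw [this]
    exact Subalgebra.prod_mem _ (fun i _ => hT i (c i) (hc i))
  · ext g
    simp only [Set.mem_iUnion, Set.mem_setOf_eq]
    constructor
    · rintro ⟨i, hi⟩ f ⟨c, hc, rfl⟩
      have : c i (jmap g) = 0 := by
        have := hC i ▸ hi; exact this _ (hc i)
      exact Finset.prod_eq_zero (Finset.mem_univ i) this
    · intro hg
      by_contra hn
      push_neg at hn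
      have : ∀ i, ∃ f ∈ T i, f (jmap g) ≠ 0 := by
        intro i
        have hni := hn i
        rw [hC i] at hni
        simpa [jmap] using hni
      choose c hc hc' using this
      have := hg (fun x => ∏ i, c i x) ⟨c, hc, rfl⟩
      exact (Finset.prod_ne_zero_iff.mpr (fun i _ => hc' i)) this

def evalFst (v : V) : ((V →ₗ[K] V) × (V →ₗ[K] V)) →ₗ[K] V where
  toFun x := x.1 v
  map_add' _ _ := rfl
  map_smul' _ _ := rfl

def evalSnd (v : V) : ((V →ₗ[K] V) × (V →ₗ[K] V)) →ₗ[K] V where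
  toFun x := x.2 v
  map_add' _ _ := rfl
  map_smul' _ _ := rfl

theorem mul_apply (g h : V ≃ₗ[K] V) (v : V) : (g * h) v = g (h v) := rfl

theorem inv_apply_apply (g : V ≃ₗ[K] V) (v : V) : g⁻¹ (g v) = v := g.symm_apply_apply v
theorem apply_inv_apply (g : V ≃ₗ[K] V) (v : V) : g (g⁻¹ v) = v := g.apply_symm_apply v

/-- Left translates of closed sets are closed. -/
theorem IsZarClosed.leftCoset {C : Set (V ≃ₗ[K] V)} (hC : IsZarClosed C) (a : V ≃ₗ[K] V) :
    IsZarClosed {x : V ≃ₗ[K] V | a⁻¹ * x ∈ C} := by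
  obtain ⟨T, hT, hCT⟩ := hC
  set L : ((V →ₗ[K] V) × (V →ₗ[K] V)) →ₗ[K] ((V →ₗ[K] V) × (V →ₗ[K] V)) :=
    (LinearMap.mulLeft K ((a⁻¹ : V ≃ₗ[K] V) : V →ₗ[K] V)).prodMap
      (LinearMap.mulRight K ((a : V ≃ₗ[K] V) : V →ₗ[K] V)) with hL
  have key : ∀ x : V ≃ₗ[K] V, jmap (a⁻¹ * x) = L (jmap x) := by
    intro x
    simp only [hL, jmap, LinearMap.prodMap_apply, LinearMap.mulLeft_apply,
      LinearMap.mulRight_apply]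
    rw [mul_inv_rev, inv_inv]
    rfl
  refine ⟨{h | ∃ f ∈ T, h = fun x => f (L x)}, ?_, ?_⟩
  · rintro h ⟨f, hf, rfl⟩
    exact comp_lin_mem (hT f hf) L
  · ext g
    simp only [Set.mem_setOf_eq]
    rw [hCT]
    simp only [Set.mem_setOf_eq]
    constructor
    · rintro hg h ⟨f, hf, rfl⟩
      show f (L (jmap g)) = 0
      rw [← key g]
      exact hg f hf
    · intro hg f hf
      have := hg _ ⟨f, hf, rfl⟩
      show f (jmap (a⁻¹ * g)) = 0
      rw [key g]
      exact this

/-- Conjugates of closed sets are closed. -/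
theorem IsZarClosed.conj {C : Set (V ≃ₗ[K] V)} (hC : IsZarClosed C) (a : V ≃ₗ[K] V) :
    IsZarClosed {x : V ≃ₗ[K] V | a⁻¹ * x * a ∈ C} := by
  obtain ⟨T, hT, hCT⟩ := hC
  set L : ((V →ₗ[K] V) × (V →ₗ[K] V)) →ₗ[K] ((V →ₗ[K] V) × (V →ₗ[K] V)) :=
    ((LinearMap.mulRight K ((a : V ≃ₗ[K] V) : V →ₗ[K] V)).comp
        (LinearMap.mulLeft K ((a⁻¹ : V ≃ₗ[K] V) : V →ₗ[K] V))).prodMap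
      ((LinearMap.mulRight K ((a : V ≃ₗ[K] V) : V →ₗ[K] V)).comp
        (LinearMap.mulLeft K ((a⁻¹ : V ≃ₗ[K] V) : V →ₗ[K] V))) with hL
  have key : ∀ x : V ≃ₗ[K] V, jmap (a⁻¹ * x * a) = L (jmap x) := by
    intro x
    simp only [hL, jmap, LinearMap.prodMap_apply, LinearMap.comp_apply,
      LinearMap.mulLeft_apply, LinearMap.mulRight_apply]
    rw [mul_inv_rev, mul_inv_rev, inv_inv, ← mul_assoc]
    rfl
  refine ⟨{h | ∃ f ∈ T, h = fun x => f (L x)}, ?_, ?_⟩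
  · rintro h ⟨f, hf, rfl⟩
    exact comp_lin_mem (hT f hf) L
  · ext g
    simp only [Set.mem_setOf_eq]
    rw [hCT]
    simp only [Set.mem_setOf_eq]
    constructor
    · rintro hg h ⟨f, hf, rfl⟩
      show f (L (jmap g)) = 0
      rw [← key g]
      exact hg f hf
    · intro hg f hf
      have := hg _ ⟨f, hf, rfl⟩
      show f (jmap (a⁻¹ * g * a)) = 0
      rw [key g]
      exact this

/-- The subgroup fixing a set of vectors pointwise. -/
def fixSubgroup (s : Set V) : Subgroup (V ≃ₗ[K] V) where
  carrier := {g | ∀ v ∈ s, g v = v}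
  one_mem' := by intro v _; rfl
  mul_mem' := by
    intro g h hg hh v hv
    rw [mul_apply, hh v hv, hg v hv]
  inv_mem' := by
    intro g hg v hv
    conv_lhs => rw [← hg v hv]
    exact inv_apply_apply g v

theorem mem_fixSubgroup_iff {s : Set V} {g : V ≃ₗ[K] V} :
    g ∈ fixSubgroup s ↔ ∀ v ∈ s, g v = v := Iff.rfl

/-- A vector lies in `p` iff all functionals vanishing on `p` kill it. -/
theorem mem_of_forall_ann {p : Submodule K V} {v : V}
    (h : ∀ φ : Module.Dual K V, (∀ u ∈ p, φ u = 0) → φ v = 0) : v ∈ p := by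
  have h2 : ∀ ψ : Module.Dual K (V ⧸ p), ψ (p.mkQ v) = 0 := by
    intro ψ
    exact h (ψ.comp p.mkQ) (by
      intro u hu
      simp [Submodule.mkQ_apply, (Submodule.Quotient.mk_eq_zero p).mpr hu])
  have := (Module.forall_dual_apply_eq_zero_iff K (p.mkQ v)).mp h2
  rwa [Submodule.mkQ_apply, Submodule.Quotient.mk_eq_zero] at this

theorem isZarClosed_fixSubgroup (s : Set V) :
    IsZarClosed ((fixSubgroup s : Subgroup (V ≃ₗ[K] V)) : Set (V ≃ₗ[K] V)) := by
  refine ⟨{f | ∃ (φ : Module.Dual K V) (v : V), v ∈ s ∧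
      f = fun x => φ (x.1 v) - φ v}, ?_, ?_⟩
  · rintro f ⟨φ, v, hv, rfl⟩
    have : (fun x : (V →ₗ[K] V) × (V →ₗ[K] V) => φ (x.1 v) - φ v)
        = ⇑(φ.comp (evalFst v)) - (fun _ => φ v) := rfl
    rw [this]
    exact Subalgebra.sub_mem _ (lin_mem _) (const_mem _)
  · ext g
    simp only [SetLike.mem_coe, mem_fixSubgroup_iff, Set.mem_setOf_eq]
    constructor
    · rintro hg f ⟨φ, v, hv, rfl⟩
      simp [hg v hv]
    · intro hg v hv
      have : ∀ φ : Module.Dual K V, φ (g v - v) = 0 := by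
        intro φ
        have := hg _ ⟨φ, v, hv, rfl⟩
        simpa [map_sub] using this
      have := (Module.forall_dual_apply_eq_zero_iff K (g v - v)).mp this
      exact sub_eq_zero.mp this

/-- The stabilizer subgroup of a submodule. -/
def stabSubgroup (p : Submodule K V) : Subgroup (V ≃ₗ[K] V) where
  carrier := {g | (∀ v ∈ p, g v ∈ p) ∧ (∀ v ∈ p, g⁻¹ v ∈ p)}
  one_mem' := ⟨fun v hv => hv, fun v hv => by simpa using hv⟩
  mul_mem' := by
    rintro g h ⟨hg1, hg2⟩ ⟨hh1, hh2⟩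
    refine ⟨fun v hv => ?_, fun v hv => ?_⟩
    · rw [mul_apply]; exact hg1 _ (hh1 v hv)
    · rw [mul_inv_rev, mul_apply]; exact hh2 _ (hg2 v hv)
  inv_mem' := by
    rintro g ⟨hg1, hg2⟩
    exact ⟨hg2, by simpa using hg1⟩

theorem mem_stabSubgroup_iff {p : Submodule K V} {g : V ≃ₗ[K] V} :
    g ∈ stabSubgroup p ↔ (∀ v ∈ p, g v ∈ p) ∧ (∀ v ∈ p, g⁻¹ v ∈ p) := Iff.rfl

theorem isZarClosed_stabSubgroup (p : Submodule K V) :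
    IsZarClosed ((stabSubgroup p : Subgroup (V ≃ₗ[K] V)) : Set (V ≃ₗ[K] V)) := by
  refine ⟨{f | ∃ (φ : Module.Dual K V) (v : V), v ∈ p ∧ (∀ u ∈ p, φ u = 0) ∧
      (f = (fun x => φ (x.1 v)) ∨ f = (fun x => φ (x.2 v)))}, ?_, ?_⟩
  · rintro f ⟨φ, v, hv, hφ, (rfl | rfl)⟩
    · exact lin_mem (φ.comp (evalFst v))
    · exact lin_mem (φ.comp (evalSnd v))
  · ext g
    simp only [SetLike.mem_coe, mem_stabSubgroup_iff, Set.mem_setOf_eq]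
    constructor
    · rintro ⟨hg1, hg2⟩ f ⟨φ, v, hv, hφ, (rfl | rfl)⟩
      · exact hφ _ (hg1 v hv)
      · exact hφ _ (hg2 v hv)
    · intro hg
      constructor
      · intro v hv
        refine mem_of_forall_ann (fun φ hφ => ?_)
        exact hg _ ⟨φ, v, hv, hφ, Or.inl rfl⟩
      · intro v hv
        refine mem_of_forall_ann (fun φ hφ => ?_)
        exact hg _ ⟨φ, v, hv, hφ, Or.inr rfl⟩

theorem mem_stabSubgroup_iff_map {p : Submodule K V} {g : V ≃ₗ[K] V} :
    g ∈ stabSubgroup p ↔ Submodule.map (g : V →ₗ[K] V) p = p := by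
  rw [mem_stabSubgroup_iff]
  constructor
  · rintro ⟨h1, h2⟩
    apply le_antisymm
    · rintro v ⟨u, hu, rfl⟩
      exact h1 u hu
    · intro v hv
      exact ⟨g⁻¹ v, h2 v hv, apply_inv_apply g v⟩
  · intro h
    constructor
    · intro v hv
      rw [← h]
      exact ⟨v, hv, rfl⟩
    · intro v hv
      rw [← h] at hv
      obtain ⟨u, hu, rfl⟩ := hv
      rwa [show (g : V →ₗ[K] V) u = g u from rfl, inv_apply_apply]

section Det

variable [FiniteDimensional K V] (p : Submodule K V) (π : V →ₗ[K] ↥p)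

/-- `detFun p π x = det (π ∘ x.1 ∘ incl)`. -/
noncomputable def detFun : ((V →ₗ[K] V) × (V →ₗ[K] V)) → K :=
  fun x => LinearMap.det ((π ∘ₗ x.1) ∘ₗ p.subtype)

theorem detFun_mem : detFun p π ∈ endPairPolynomials K V := by
  classical
  set b := Module.finBasis K ↥p with hb
  have key : detFun p π = ∑ σ : Equiv.Perm (Fin (Module.finrank K ↥p)),
      (fun _ => ((Equiv.Perm.sign σ : ℤ) : K)) *
        ∏ i, ⇑((b.coord (σ i)) ∘ₗ (π ∘ₗ evalFst (↑(b i)))) := by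
    funext x
    rw [detFun, ← LinearMap.det_toMatrix b, Matrix.det_apply, Finset.sum_apply]
    congr 1
    funext σ
    rw [Pi.mul_apply, Finset.prod_apply, Units.smul_def, zsmul_eq_mul]
    congr 1
    exact Finset.prod_congr rfl
      (fun i _ => by simp [LinearMap.toMatrix_apply, evalFst])
  rw [key]
  exact Subalgebra.sum_mem _ (fun σ _ => Subalgebra.mul_mem _ (const_mem _)
    (Subalgebra.prod_mem _ (fun i _ => lin_mem _)))


variable (hπ : ∀ v ∈ p, ↑(π v) = v)

include hπ in
theorem proj_comp_subtype : π ∘ₗ p.subtype = LinearMap.id := by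
  ext v
  show ((π ∘ₗ p.subtype) v : V) = (LinearMap.id (R := K) v : V)
  simp only [LinearMap.comp_apply, Submodule.coe_subtype, LinearMap.id_apply]
  exact hπ ↑v v.2

include hπ in
theorem comp_eq (g h : V ≃ₗ[K] V) (hh : ∀ v ∈ p, h v ∈ p) :
    (π ∘ₗ ((g * h : V ≃ₗ[K] V) : V →ₗ[K] V)) ∘ₗ p.subtype
      = ((π ∘ₗ (g : V →ₗ[K] V)) ∘ₗ p.subtype) ∘ₗ ((π ∘ₗ (h : V →ₗ[K] V)) ∘ₗ p.subtype) := by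
  ext v
  simp only [LinearMap.comp_apply, Submodule.coe_subtype, LinearEquiv.coe_coe]
  rw [hπ _ (hh ↑v v.2)]
  rfl

include hπ in
theorem detFun_jmap_mul (g h : V ≃ₗ[K] V) (hh : ∀ v ∈ p, h v ∈ p) :
    detFun p π (jmap (g * h)) = detFun p π (jmap g) * detFun p π (jmap h) := by
  show LinearMap.det _ = _
  rw [show (π ∘ₗ ((jmap (g * h)).1)) ∘ₗ p.subtype
      = (π ∘ₗ ((g * h : V ≃ₗ[K] V) : V →ₗ[K] V)) ∘ₗ p.subtype from rfl]
  rw [comp_eq p π hπ g h hh, LinearMap.det_comp]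
  rfl

include hπ in
theorem detFun_jmap_one : detFun p π (jmap (1 : V ≃ₗ[K] V)) = 1 := by
  show LinearMap.det _ = 1
  rw [show (π ∘ₗ ((jmap (1 : V ≃ₗ[K] V)).1)) ∘ₗ p.subtype = π ∘ₗ p.subtype by rfl]
  rw [proj_comp_subtype p π hπ, LinearMap.det_id]

/-- The closed subgroup of elements stabilizing `p` whose determinant on `p` is an
`m`-th root of unity. -/
def detSubgroup (m : ℕ) : Subgroup (V ≃ₗ[K] V) where
  carrier := {g | g ∈ stabSubgroup p ∧ (detFun p π (jmap g)) ^ m = 1}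
  one_mem' := by
    refine ⟨Subgroup.one_mem _, ?_⟩
    rw [detFun_jmap_one p π hπ, one_pow]
  mul_mem' := by
    rintro g h ⟨hg, hg2⟩ ⟨hh, hh2⟩
    refine ⟨Subgroup.mul_mem _ hg hh, ?_⟩
    rw [detFun_jmap_mul p π hπ g h (mem_stabSubgroup_iff.mp hh).1, mul_pow, hg2, hh2, one_mul]
  inv_mem' := by
    rintro g ⟨hg, hg2⟩
    refine ⟨Subgroup.inv_mem _ hg, ?_⟩
    have key : detFun p π (jmap g⁻¹) * detFun p π (jmap g) = 1 := by
      rw [← detFun_jmap_mul p π hπ g⁻¹ g (mem_stabSubgroup_iff.mp hg).1, inv_mul_cancel,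
        detFun_jmap_one p π hπ]
    have : (detFun p π (jmap g⁻¹)) ^ m * (detFun p π (jmap g)) ^ m = 1 := by
      rw [← mul_pow, key, one_pow]
    rwa [hg2, mul_one] at this

theorem mem_detSubgroup_iff {m : ℕ} {g : V ≃ₗ[K] V} :
    g ∈ detSubgroup p π hπ m ↔ g ∈ stabSubgroup p ∧ (detFun p π (jmap g)) ^ m = 1 := Iff.rfl

theorem isZarClosed_detSubgroup (m : ℕ) :
    IsZarClosed ((detSubgroup p π hπ m : Subgroup (V ≃ₗ[K] V)) : Set (V ≃ₗ[K] V)) := by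
  obtain ⟨T0, hT0, hT0C⟩ := isZarClosed_stabSubgroup p
  refine ⟨T0 ∪ {fun x => (detFun p π x) ^ m - 1}, ?_, ?_⟩
  · rintro f (hf | hf)
    · exact hT0 f hf
    · rw [Set.mem_singleton_iff.mp hf]
      exact Subalgebra.sub_mem _ (Subalgebra.pow_mem _ (detFun_mem p π) m) (const_mem 1)
  · ext g
    simp only [SetLike.mem_coe, mem_detSubgroup_iff, Set.mem_setOf_eq]
    have hstab : g ∈ stabSubgroup p ↔ ∀ f ∈ T0, f (jmap g) = 0 := by
      constructor
      · intro hg f hf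
        have : g ∈ {g : V ≃ₗ[K] V | ∀ f ∈ T0,
            f ((g : V →ₗ[K] V), ((g⁻¹ : V ≃ₗ[K] V) : V →ₗ[K] V)) = 0} := hT0C ▸ hg
        exact this f hf
      · intro hg
        have : g ∈ ((stabSubgroup p : Subgroup (V ≃ₗ[K] V)) : Set (V ≃ₗ[K] V)) := by
          rw [hT0C]; exact hg
        exact this
    constructor
    · rintro ⟨hg, hg2⟩ f (hf | hf)
      · exact hstab.mp hg f hf
      · rw [Set.mem_singleton_iff.mp hf]
        show (detFun p π (jmap g)) ^ m - 1 = 0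
        rw [hg2, sub_self]
    · intro hg
      refine ⟨hstab.mpr (fun f hf => hg f (Or.inl hf)), ?_⟩
      have := hg _ (Or.inr rfl)
      have : (detFun p π (jmap g)) ^ m - 1 = 0 := this
      exact sub_eq_zero.mp this

include hπ in
theorem det_restrict_eq (g : V ≃ₗ[K] V) (h : ∀ v ∈ p, g v ∈ p) :
    LinearMap.det ((g : V →ₗ[K] V).restrict h) = detFun p π (jmap g) := by
  have : (g : V →ₗ[K] V).restrict h = (π ∘ₗ (g : V →ₗ[K] V)) ∘ₗ p.subtype := by
    ext v
    simp only [LinearMap.restrict_apply, LinearMap.comp_apply, Submodule.coe_subtype,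
      LinearEquiv.coe_coe]
    rw [hπ _ (h ↑v v.2)]
  rw [detFun, this]
  rfl

include hπ in
theorem detFun_of_scalar (g : V ≃ₗ[K] V) (c : K) (h : ∀ v ∈ p, g v = c • v) :
    detFun p π (jmap g) = c ^ Module.finrank K ↥p := by
  have : (π ∘ₗ ((jmap g).1)) ∘ₗ p.subtype = c • (LinearMap.id : ↥p →ₗ[K] ↥p) := by
    ext v
    simp only [LinearMap.comp_apply, Submodule.coe_subtype, LinearMap.smul_apply,
      LinearMap.id_apply]
    rw [show ((jmap g).1 : V →ₗ[K] V) ↑v = g ↑v from rfl, h ↑v v.2, map_smul]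
    rw [Submodule.coe_smul, Submodule.coe_smul, hπ ↑v v.2]
  rw [detFun, this, LinearMap.det_smul, LinearMap.det_id, mul_one]


end Det

section Noeth
variable (K V)
variable [FiniteDimensional K V]

noncomputable def polyMap :
    MvPolynomial (Fin (Module.finrank K
      (Module.Dual K ((V →ₗ[K] V) × (V →ₗ[K] V))))) K →ₐ[K] (((V →ₗ[K] V) × (V →ₗ[K] V)) → K) :=
  MvPolynomial.aeval (fun i => ⇑(Module.finBasis K (Module.Dual K ((V →ₗ[K] V) × (V →ₗ[K] V))) i))

variable {K V}

theorem mem_polyMap_range {f : ((V →ₗ[K] V) × (V →ₗ[K] V)) → K}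
    (hf : f ∈ endPairPolynomials K V) : f ∈ (polyMap K V).range := by
  revert f
  have : endPairPolynomials K V ≤ (polyMap K V).range := by
    refine Algebra.adjoin_le ?_
    rintro f ⟨φ, rfl⟩
    set b := Module.finBasis K (Module.Dual K ((V →ₗ[K] V) × (V →ₗ[K] V))) with hbdef
    have hrepr : φ = ∑ i, b.repr φ i • b i := (b.sum_repr φ).symm
    have hcoe : ⇑φ = ∑ i, b.repr φ i • ⇑(b i) := by
      funext x
      conv_lhs => rw [hrepr]
      simp only [LinearMap.sum_apply, Finset.sum_apply, LinearMap.smul_apply, Pi.smul_apply]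
    show ⇑φ ∈ (polyMap K V).range
    rw [hcoe]
    refine Subalgebra.sum_mem _ (fun i _ => Subalgebra.smul_mem _ ?_ _)
    exact ⟨MvPolynomial.X i, MvPolynomial.aeval_X _ i⟩
  exact fun f hf => this hf

/-- The ideal of polynomials vanishing on a subset of `GL(V)`. -/
noncomputable def vanishingIdeal (C : Set (V ≃ₗ[K] V)) :
    Ideal (MvPolynomial (Fin (Module.finrank K
      (Module.Dual K ((V →ₗ[K] V) × (V →ₗ[K] V))))) K) where
  carrier := {P | ∀ g ∈ C, polyMap K V P (jmap g) = 0}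
  zero_mem' := by intro g _; simp
  add_mem' := by
    intro P Q hP hQ g hg
    rw [map_add, Pi.add_apply, hP g hg, hQ g hg, add_zero]
  smul_mem' := by
    intro Q P hP g hg
    rw [smul_eq_mul, map_mul, Pi.mul_apply, hP g hg, mul_zero]

theorem mem_vanishingIdeal_iff {C : Set (V ≃ₗ[K] V)} {P} :
    P ∈ vanishingIdeal C ↔ ∀ g ∈ C, polyMap K V P (jmap g) = 0 := Iff.rfl

theorem closed_eq_locus {C : Set (V ≃ₗ[K] V)} (hC : IsZarClosed C) :
    C = {g | ∀ P ∈ vanishingIdeal C, polyMap K V P (jmap g) = 0} := by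
  obtain ⟨T, hT, hCT⟩ := hC
  apply Set.Subset.antisymm
  · intro g hg P hP
    exact hP g hg
  · intro g hg
    rw [hCT]
    intro f hf
    obtain ⟨P, hP⟩ := mem_polyMap_range (hT f hf)
    have hP' : polyMap K V P = f := hP
    have hPv : P ∈ vanishingIdeal C := by
      intro x hx
      rw [show (polyMap K V) P = f from hP']
      have := hCT ▸ hx
      exact this f hf
    have := hg P hPv
    rw [show (polyMap K V) P = f from hP'] at this
    exact this

theorem exists_minimal_closed (F : Set (Set (V ≃ₗ[K] V)))
    (hF : ∀ C ∈ F, IsZarClosed C) (hne : F.Nonempty) :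
    ∃ C0 ∈ F, ∀ C ∈ F, C ⊆ C0 → C = C0 := by
  have hnoeth : IsNoetherian (MvPolynomial (Fin (Module.finrank K
      (Module.Dual K ((V →ₗ[K] V) × (V →ₗ[K] V))))) K) (MvPolynomial (Fin (Module.finrank K
      (Module.Dual K ((V →ₗ[K] V) × (V →ₗ[K] V))))) K) :=
    isNoetherianRing_iff.mp inferInstance
  obtain ⟨I0, ⟨C0, hC0F, hI0⟩, hmax⟩ :=
    (set_has_maximal_iff_noetherian.mpr hnoeth) (vanishingIdeal '' F)
      (hne.image _)
  refine ⟨C0, hC0F, fun C hCF hsub => ?_⟩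
  have hle : I0 ≤ vanishingIdeal C := by
    rw [← hI0]
    intro P hP g hg
    exact hP g (hsub hg)
  have heq : vanishingIdeal C = I0 := by
    by_contra hne'
    exact hmax (vanishingIdeal C) ⟨C, hCF, rfl⟩ (lt_of_le_of_ne hle (by
      intro h; exact hne' h.symm))
  calc C = {g | ∀ P ∈ vanishingIdeal C, polyMap K V P (jmap g) = 0} :=
        closed_eq_locus (hF C hCF)
    _ = {g | ∀ P ∈ vanishingIdeal C0, polyMap K V P (jmap g) = 0} := by rw [heq, hI0]
    _ = C0 := (closed_eq_locus (hF C0 hC0F)).symm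

end Noeth

/-- Existence of minimal nonzero submodules satisfying a predicate. -/
theorem exists_minimal_submodule [FiniteDimensional K V] (P : Submodule K V → Prop)
    (q : Submodule K V) (hq : P q) (hq0 : q ≠ ⊥) :
    ∃ p : Submodule K V, p ≤ q ∧ P p ∧ p ≠ ⊥ ∧
      ∀ p' : Submodule K V, p' ≤ p → P p' → p' ≠ ⊥ → p' = p := by
  obtain ⟨p, ⟨hpq, hPp, hp0⟩, hmin⟩ :=
    IsArtinian.set_has_minimal {p : Submodule K V | p ≤ q ∧ P p ∧ p ≠ ⊥}
      ⟨q, le_rfl, hq, hq0⟩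
  refine ⟨p, hpq, hPp, hp0, fun p' hle hP' h0 => ?_⟩
  by_contra hne
  exact hmin p' ⟨le_trans hle hpq, hP', h0⟩ (lt_of_le_of_ne hle hne)

/-- A subgroup whose cosets are separated by a map to a finite type has finite index. -/
theorem finiteIndex_of_separating {G : Type*} [Group G] (H : Subgroup G)
    {X : Type*} [Finite X] (F : G → X)
    (h : ∀ a b : G, a⁻¹ * b ∈ H ↔ F a = F b) : H.FiniteIndex := by
  have hresp : ∀ a b : G, QuotientGroup.leftRel H a b → F a = F b := fun a b hab =>
    (h a b).mp (QuotientGroup.leftRel_apply.mp hab)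
  let f : G ⧸ H → X := fun q => Quotient.liftOn' q F (fun a b hab => hresp a b hab)
  have hinj : Function.Injective f := by
    intro q1 q2
    induction q1 using Quotient.inductionOn' with
    | h a =>
      induction q2 using Quotient.inductionOn' with
      | h b =>
        intro hfe
        exact Quotient.sound' (QuotientGroup.leftRel_apply.mpr ((h a b).mpr hfe))
  haveI : Finite (G ⧸ H) := Finite.of_injective f hinj
  exact Subgroup.finiteIndex_of_finite_quotient

/-- A subgroup covered by finitely many cosets has finite index. -/
theorem finiteIndex_of_cover {G : Type*} [Group G] (H : Subgroup G)
    {ι : Type*} [Finite ι] (r : ι → G)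
    (hcov : ∀ g : G, ∃ i, (r i)⁻¹ * g ∈ H) : H.FiniteIndex := by
  have hsurj : Function.Surjective (fun i => (QuotientGroup.mk (r i) : G ⧸ H)) := by
    intro q
    induction q using Quotient.inductionOn' with
    | h g =>
      obtain ⟨i, hi⟩ := hcov g
      exact ⟨i, Quotient.sound' (QuotientGroup.leftRel_apply.mpr hi)⟩
  haveI : Finite (G ⧸ H) := Finite.of_surjective _ hsurj
  exact Subgroup.finiteIndex_of_finite_quotient

theorem finite_pow_eq_one (r : ℕ) (hr : 0 < r) : {x : K | x ^ r = 1}.Finite := by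
  refine Set.Finite.subset
    (Polynomial.finite_setOf_isRoot (p := Polynomial.X ^ r - Polynomial.C 1)
      (Polynomial.X_pow_sub_C_ne_zero hr 1)) ?_
  intro x hx
  simp only [Set.mem_setOf_eq, Polynomial.IsRoot, Polynomial.eval_sub, Polynomial.eval_pow,
    Polynomial.eval_X, Polynomial.eval_C]
  rw [Set.mem_setOf_eq.mp hx, sub_self]


section Eig

/-- Simultaneous eigenspace of the subgroup `W` with character `χ`. -/
def eigSubmodule (W : Subgroup (V ≃ₗ[K] V)) (χ : (V ≃ₗ[K] V) → K) : Submodule K V where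
  carrier := {v | ∀ w ∈ W, w v = χ w • v}
  add_mem' := by
    intro a b ha hb w hw
    rw [map_add, ha w hw, hb w hw, smul_add]
  zero_mem' := by intro w hw; simp
  smul_mem' := by
    intro c v hv w hw
    rw [map_smul, hv w hw, smul_comm]

theorem mem_eigSubmodule_iff {W : Subgroup (V ≃ₗ[K] V)} {χ : (V ≃ₗ[K] V) → K} {v : V} :
    v ∈ eigSubmodule W χ ↔ ∀ w ∈ W, w v = χ w • v := Iff.rfl

/-- Fixed vectors of a single automorphism. -/
def fixedSubmodule (w : V ≃ₗ[K] V) : Submodule K V where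
  carrier := {v | w v = v}
  add_mem' := by intro a b ha hb; simp only [Set.mem_setOf_eq, map_add] at *; rw [ha, hb]
  zero_mem' := by simp
  smul_mem' := by intro c v hv; simp only [Set.mem_setOf_eq, map_smul] at *; rw [hv]

/-- Eigenvectors of `w` inside `U` for the eigenvalue `c`. -/
def eigOn (w : V ≃ₗ[K] V) (c : K) (U : Submodule K V) : Submodule K V where
  carrier := {v | v ∈ U ∧ w v = c • v}
  add_mem' := by
    rintro a b ⟨ha1, ha2⟩ ⟨hb1, hb2⟩
    exact ⟨U.add_mem ha1 hb1, by rw [map_add, ha2, hb2, smul_add]⟩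
  zero_mem' := ⟨U.zero_mem, by simp⟩
  smul_mem' := by
    rintro t v ⟨hv1, hv2⟩
    exact ⟨U.smul_mem t hv1, by rw [map_smul, hv2, smul_comm]⟩

/-- Key independence fact: a zero sum of vectors from simultaneous eigenspaces of
pairwise distinct characters has all terms zero. -/
theorem eig_sum_zero (W : Subgroup (V ≃ₗ[K] V)) (t : Finset (Submodule K V))
    (ht : ∀ X ∈ t, ∃ χ : (V ≃ₗ[K] V) → K, X = eigSubmodule W χ)
    (u : Submodule K V → V) (hu : ∀ X ∈ t, u X ∈ X)
    (hsum : ∑ X ∈ t, u X = 0) : ∀ X ∈ t, u X = 0 := by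
  classical
  induction t using Finset.strongInduction generalizing u with
  | _ t ih =>
    rcases Finset.eq_empty_or_nonempty t with rfl | ⟨X, hX⟩
    · intro Y hY; exact absurd hY (Finset.notMem_empty Y)
    by_cases hall : ∀ Y ∈ t, Y = X
    · have htX : t = {X} := by
        apply Finset.Subset.antisymm
        · intro Y hY; rw [Finset.mem_singleton]; exact hall Y hY
        · intro Y hY; rw [Finset.mem_singleton] at hY; rwa [hY]
      intro Y hY
      rw [htX] at hsum hY
      rw [Finset.sum_singleton] at hsum
      rw [Finset.mem_singleton] at hY
      rwa [hY]
    push_neg at hall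
    obtain ⟨X', hX't, hX'X⟩ := hall
    choose! χf hχf using ht
    -- find a separating element of W
    have hsep : ∃ w ∈ W, χf X w ≠ χf X' w := by
      by_contra hns
      push_neg at hns
      apply hX'X
      have : eigSubmodule W (χf X') = eigSubmodule W (χf X) := by
        ext v
        simp only [mem_eigSubmodule_iff]
        constructor
        · intro hv w hw; rw [hns w hw]; exact hv w hw
        · intro hv w hw; rw [← hns w hw]; exact hv w hw
      rw [hχf X' hX't, hχf X hX, this]
    obtain ⟨w, hwW, hwsep⟩ := hsep
    -- apply w to the relation
    have hw_u : ∀ Y ∈ t, w (u Y) = χf Y w • u Y := by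
      intro Y hY
      have hm : u Y ∈ eigSubmodule W (χf Y) := by
        rw [← hχf Y hY]; exact hu Y hY
      exact hm w hwW
    have hrel : ∑ Y ∈ t, (χf Y w - χf X w) • u Y = 0 := by
      have h1 : ∑ Y ∈ t, w (u Y) = 0 := by
        rw [← map_sum, hsum, map_zero]
      have h2 : ∑ Y ∈ t, χf Y w • u Y = 0 := by
        rw [← h1]; exact Finset.sum_congr rfl (fun Y hY => (hw_u Y hY).symm)
      calc ∑ Y ∈ t, (χf Y w - χf X w) • u Y
          = ∑ Y ∈ t, (χf Y w • u Y) - ∑ Y ∈ t, (χf X w • u Y) := by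
            rw [← Finset.sum_sub_distrib]
            exact Finset.sum_congr rfl (fun Y _ => sub_smul _ _ _)
        _ = 0 - χf X w • ∑ Y ∈ t, u Y := by rw [h2, Finset.smul_sum]
        _ = 0 := by rw [hsum, smul_zero, sub_zero]
    -- sum over t.erase X of the rescaled vectors vanishes
    have hrel' : ∑ Y ∈ t.erase X, (χf Y w - χf X w) • u Y = 0 := by
      have := Finset.sum_erase_add t (fun Y => (χf Y w - χf X w) • u Y) hX
      simp only [sub_self, zero_smul, add_zero] at this
      rw [this]; exact hrel
    have hihyp := ih (t.erase X) (Finset.erase_ssubset hX)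
      (fun Y hY => ⟨χf Y, hχf Y (Finset.mem_of_mem_erase hY)⟩)
      (fun Y => (χf Y w - χf X w) • u Y)
      (fun Y hY => Submodule.smul_mem _ _ (hu Y (Finset.mem_of_mem_erase hY)))
      hrel'
    have huX' : u X' = 0 := by
      have := hihyp X' (Finset.mem_erase.mpr ⟨hX'X, hX't⟩)
      rcases smul_eq_zero.mp this with h | h
      · exact absurd (sub_eq_zero.mp h) (Ne.symm hwsep)
      · exact h
    -- now remove X' and induct again
    have hsum' : ∑ Y ∈ t.erase X', u Y = 0 := by
      have := Finset.sum_erase_add t u hX't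
      rw [huX', add_zero] at this
      rw [this]; exact hsum
    have hihyp2 := ih (t.erase X') (Finset.erase_ssubset hX't)
      (fun Y hY => ⟨χf Y, hχf Y (Finset.mem_of_mem_erase hY)⟩)
      u (fun Y hY => hu Y (Finset.mem_of_mem_erase hY)) hsum'
    intro Y hY
    by_cases hYX' : Y = X'
    · rwa [hYX']
    · exact hihyp2 Y (Finset.mem_erase.mpr ⟨hYX', hY⟩)

/-- There are only finitely many nonzero simultaneous eigenspaces. -/
theorem eig_finite [FiniteDimensional K V] (W : Subgroup (V ≃ₗ[K] V)) :
    {X : Submodule K V | X ≠ ⊥ ∧ ∃ χ : (V ≃ₗ[K] V) → K, X = eigSubmodule W χ}.Finite := by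
  classical
  by_contra hinf
  have hinf' : {X : Submodule K V | X ≠ ⊥ ∧
      ∃ χ : (V ≃ₗ[K] V) → K, X = eigSubmodule W χ}.Infinite := hinf
  obtain ⟨t, htsub, htcard⟩ := hinf'.exists_subset_card_eq (Module.finrank K V + 1)
  have hch : ∀ X ∈ t, ∃ χ : (V ≃ₗ[K] V) → K, X = eigSubmodule W χ :=
    fun X hX => (htsub hX).2
  have hvex : ∀ X ∈ t, ∃ x ∈ X, x ≠ 0 :=
    fun X hX => Submodule.exists_mem_ne_zero_of_ne_bot (htsub hX).1
  choose! v hv1 hv2 using hvex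
  have hli : LinearIndependent K (fun X : ↥t => v ↑X) := by
    rw [Fintype.linearIndependent_iff]
    intro g hg
    set u : Submodule K V → V := fun X => if h : X ∈ t then g ⟨X, h⟩ • v X else 0 with hudef
    have hueq : ∀ i : ↥t, u ↑i = g i • v ↑i := by
      intro i
      simp only [hudef, dif_pos i.2]
    have hsum : ∑ X ∈ t, u X = 0 := by
      rw [← Finset.sum_attach t u]
      rw [show (t.attach : Finset ↥t) = (Finset.univ : Finset ↥t) from rfl]
      rw [Finset.sum_congr rfl (fun i _ => hueq i)]
      exact hg
    have hz := eig_sum_zero W t hch u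
      (fun X hX => by
        rw [hudef]
        simp only [dif_pos hX]
        exact Submodule.smul_mem _ _ (hv1 X hX)) hsum
    intro i
    have h0 := hz ↑i i.2
    rw [hueq i] at h0
    rcases smul_eq_zero.mp h0 with h | h
    · exact h
    · exact absurd h (hv2 ↑i i.2)
  have hcard := hli.fintype_card_le_finrank
  rw [Fintype.card_coe, htcard] at hcard
  omega

end Eig

section Bridge

theorem isZarClosed_coe_iInf {ι : Sort*} {H : ι → Subgroup (V ≃ₗ[K] V)}
    (h : ∀ i, IsZarClosed ((H i : Subgroup (V ≃ₗ[K] V)) : Set (V ≃ₗ[K] V))) :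
    IsZarClosed ((⨅ i, H i : Subgroup (V ≃ₗ[K] V)) : Set (V ≃ₗ[K] V)) := by
  rw [Subgroup.coe_iInf]
  exact IsZarClosed.iInter h

theorem isZarClosed_zarSubgroupClosure (S : Set (V ≃ₗ[K] V)) :
    IsZarClosed ((zarSubgroupClosure S : Subgroup (V ≃ₗ[K] V)) : Set (V ≃ₗ[K] V)) := by
  unfold zarSubgroupClosure
  exact isZarClosed_coe_iInf (fun H => isZarClosed_coe_iInf (fun hH => hH.2))

theorem subset_zarSubgroupClosure (S : Set (V ≃ₗ[K] V)) :
    S ⊆ ((zarSubgroupClosure S : Subgroup (V ≃ₗ[K] V)) : Set (V ≃ₗ[K] V)) := by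
  intro x hx
  rw [SetLike.mem_coe, zarSubgroupClosure]
  simp only [Subgroup.mem_iInf]
  exact fun H hH => hH.1 hx

theorem zarSubgroupClosure_le {S : Set (V ≃ₗ[K] V)} {H : Subgroup (V ≃ₗ[K] V)}
    (h1 : S ⊆ (H : Set (V ≃ₗ[K] V))) (h2 : IsZarClosed (H : Set (V ≃ₗ[K] V))) :
    zarSubgroupClosure S ≤ H :=
  iInf₂_le H ⟨h1, h2⟩

theorem identityComponent_le {M H : Subgroup (V ≃ₗ[K] V)}
    (h1 : H ≤ M) (h2 : IsZarClosed (H : Set (V ≃ₗ[K] V)))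
    (h3 : (H.subgroupOf M).FiniteIndex) : identityComponent M ≤ H :=
  iInf₂_le H ⟨h1, h2, h3⟩

theorem le_identityComponent {M L : Subgroup (V ≃ₗ[K] V)}
    (h : ∀ H : Subgroup (V ≃ₗ[K] V), H ≤ M → IsZarClosed (H : Set (V ≃ₗ[K] V)) →
      (H.subgroupOf M).FiniteIndex → L ≤ H) : L ≤ identityComponent M :=
  le_iInf₂ (fun H hH => h H hH.1 hH.2.1 hH.2.2)

end Bridge

end SSM

open SSM in
/-- If for every finite-index subgroup `G' ⊆ G` the restriction `ρ|_{G'}` is semisimple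
with all simple constituents of finite-order determinant, then the identity component of
the Zariski closure of `ρ(G)` in `GL(V)` is a semisimple algebraic group. -/
theorem semisimple_monodromy_of_admissible
    {K : Type*} [Field K] [CharZero K] [IsAlgClosed K]
    {V : Type*} [AddCommGroup V] [Module K V] [FiniteDimensional K V]
    {G : Type*} [Group G] (ρ : G →* (V ≃ₗ[K] V))
    (hadm : ∀ G' : Subgroup G, G'.FiniteIndex → IsAdmissibleOn ρ G') :
    IsSemisimpleAlgGroup (identityComponent (monodromyGroup ρ)) := by
  classical
  set M : Subgroup (V ≃ₗ[K] V) := monodromyGroup ρ with hMdef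
  set Mo : Subgroup (V ≃ₗ[K] V) := identityComponent M with hModef
  have hMclosed : IsZarClosed (M : Set (V ≃ₗ[K] V)) := isZarClosed_zarSubgroupClosure _
  have hrange : ρ.range ≤ M := by
    rintro x ⟨g, rfl⟩
    exact subset_zarSubgroupClosure _ ⟨g, rfl⟩
  -- The family defining the identity component of M.
  set Fam : Set (Subgroup (V ≃ₗ[K] V)) :=
    {H | H ≤ M ∧ IsZarClosed (H : Set (V ≃ₗ[K] V)) ∧ (H.subgroupOf M).FiniteIndex}
    with hFamdef
  have hMoiInf : Mo = ⨅ H ∈ Fam, H := rfl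
  have hMFam : M ∈ Fam := by
    refine ⟨le_rfl, hMclosed, ?_⟩
    rw [Subgroup.subgroupOf_self]
    infer_instance
  have hMo_le : ∀ H ∈ Fam, Mo ≤ H := fun H hH => iInf₂_le H hH
  -- Noetherianity: some member of the family is minimal, hence equals Mo.
  have hMoFam : Mo ∈ Fam := by
    obtain ⟨C0, hC0mem, hC0min⟩ := exists_minimal_closed
      ((fun H : Subgroup (V ≃ₗ[K] V) => (H : Set (V ≃ₗ[K] V))) '' Fam)
      (by rintro C ⟨H, hH, rfl⟩; exact hH.2.1) ⟨M, M, hMFam, rfl⟩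
    obtain ⟨H0, hH0Fam, rfl⟩ := hC0mem
    have hH0min : ∀ H ∈ Fam, H0 ≤ H := by
      intro H hH
      have hinter : H ⊓ H0 ∈ Fam := by
        refine ⟨le_trans inf_le_left hH.1, ?_, ?_⟩
        · rw [Subgroup.coe_inf]
          exact IsZarClosed.inter hH.2.1 hH0Fam.2.1
        · have heq : (H ⊓ H0).subgroupOf M = H.subgroupOf M ⊓ H0.subgroupOf M := by
            ext x
            simp [Subgroup.mem_subgroupOf]
          rw [heq]
          haveI := hH.2.2
          haveI := hH0Fam.2.2
          infer_instance
      have := hC0min ((H ⊓ H0 : Subgroup (V ≃ₗ[K] V)) : Set (V ≃ₗ[K] V))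
        ⟨H ⊓ H0, hinter, rfl⟩ (by
          rw [Subgroup.coe_inf]
          exact Set.inter_subset_right)
      have heq : H ⊓ H0 = H0 := SetLike.coe_injective this
      rw [← heq]
      exact inf_le_left
    have : Mo = H0 := le_antisymm (hMo_le H0 hH0Fam) (le_iInf₂ hH0min)
    rw [this]
    exact hH0Fam
  obtain ⟨hMoM, hMoClosed, hMoFI⟩ := hMoFam
  -- connectedness of Mo in usable form
  have hMoConn : ∀ H : Subgroup (V ≃ₗ[K] V), H ≤ Mo → IsZarClosed (H : Set (V ≃ₗ[K] V)) →
      (H.subgroupOf Mo).FiniteIndex → Mo ≤ H := by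
    intro H h1 h2 h3
    refine hMo_le H ⟨le_trans h1 hMoM, h2, ?_⟩
    refine ⟨?_⟩
    show H.relIndex M ≠ 0
    rw [← Subgroup.relIndex_mul_relIndex H Mo M h1 hMoM]
    exact mul_ne_zero h3.index_ne_zero hMoFI.index_ne_zero
  -- normality of Mo in M
  have hMoNormal : ∀ m ∈ M, ∀ x ∈ Mo, m * x * m⁻¹ ∈ Mo := by
    intro m hm
    set Hm : Subgroup (V ≃ₗ[K] V) := Mo.comap (MulAut.conj m).toMonoidHom with hHmdef
    have hmemHm : ∀ x : V ≃ₗ[K] V, x ∈ Hm ↔ m * x * m⁻¹ ∈ Mo := by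
      intro x
      rw [hHmdef, Subgroup.mem_comap]
      rfl
    have hHmFam : Hm ∈ Fam := by
      refine ⟨?_, ?_, ?_⟩
      · intro x hx
        have h1 : m * x * m⁻¹ ∈ M := hMoM ((hmemHm x).mp hx)
        have : x = m⁻¹ * (m * x * m⁻¹) * m := by group
        rw [this]
        exact M.mul_mem (M.mul_mem (M.inv_mem hm) h1) hm
      · have hset : ((Hm : Subgroup (V ≃ₗ[K] V)) : Set (V ≃ₗ[K] V))
            = {x : V ≃ₗ[K] V | (m⁻¹)⁻¹ * x * m⁻¹ ∈ (Mo : Set (V ≃ₗ[K] V))} := by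
          ext x
          rw [SetLike.mem_coe, hmemHm x]
          simp [inv_inv]
        rw [hset]
        exact IsZarClosed.conj hMoClosed m⁻¹
      · haveI := hMoFI
        haveI : Finite (↥M ⧸ Mo.subgroupOf M) := Subgroup.finite_quotient_of_finiteIndex
        set m' : ↥M := ⟨m, hm⟩ with hm'def
        refine finiteIndex_of_cover (Hm.subgroupOf M)
          (fun q : ↥M ⧸ Mo.subgroupOf M => m'⁻¹ * q.out * m') ?_
        intro x
        refine ⟨Quotient.mk'' (m' * x * m'⁻¹), ?_⟩
        have hrel : (Quotient.mk'' (m' * x * m'⁻¹) : ↥M ⧸ Mo.subgroupOf M).out⁻¹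
            * (m' * x * m'⁻¹) ∈ Mo.subgroupOf M :=
          QuotientGroup.leftRel_apply.mp
            (Quotient.exact' (Quotient.out_eq' (Quotient.mk'' (m' * x * m'⁻¹))))
        set o := (Quotient.mk'' (m' * x * m'⁻¹) : ↥M ⧸ Mo.subgroupOf M).out with hodef
        have hy : (↑o)⁻¹ * (m * ↑x * m⁻¹) ∈ Mo := by
          have := Subgroup.mem_subgroupOf.mp hrel
          simpa [hm'def] using this
        rw [Subgroup.mem_subgroupOf, hmemHm]
        have hcoe : m * (↑((m'⁻¹ * o * m')⁻¹ * x) : V ≃ₗ[K] V) * m⁻¹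
            = (↑o)⁻¹ * (m * ↑x * m⁻¹) := by
          simp only [Subgroup.coe_mul, Subgroup.coe_inv, hm'def]
          group
        rw [hcoe]
        exact hy
    intro x hx
    exact (hmemHm x).mp (hMo_le Hm hHmFam hx)
  -- the preimage subgroup G'
  set G' : Subgroup G := Mo.comap ρ with hG'def
  have hG'FI : G'.FiniteIndex := by
    refine ⟨?_⟩
    rw [hG'def, Subgroup.index_comap]
    intro h0
    exact hMoFI.index_ne_zero (Subgroup.relIndex_eq_zero_of_le_right hrange h0)
  have hρG' : ∀ g ∈ G', ρ g ∈ Mo := fun g hg => hg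
  -- the coset lemma: any closed subgroup containing ρ(G') contains Mo
  have hF5 : ∀ D : Subgroup (V ≃ₗ[K] V), IsZarClosed (D : Set (V ≃ₗ[K] V)) →
      (∀ g ∈ G', ρ g ∈ D) → Mo ≤ D := by
    intro D hDclosed hDsub
    set S' : Set (V ≃ₗ[K] V) := (fun g => ρ g) '' (G' : Set G) with hS'def
    set N : Subgroup (V ≃ₗ[K] V) := zarSubgroupClosure S' with hNdef
    have hS'Mo : S' ⊆ (Mo : Set (V ≃ₗ[K] V)) := by
      rintro x ⟨g, hg, rfl⟩
      exact hρG' g hg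
    have hS'N : S' ⊆ (N : Set (V ≃ₗ[K] V)) := subset_zarSubgroupClosure S'
    have hNMo : N ≤ Mo := zarSubgroupClosure_le hS'Mo hMoClosed
    have hNclosed : IsZarClosed (N : Set (V ≃ₗ[K] V)) := isZarClosed_zarSubgroupClosure S'
    have hND : N ≤ D := zarSubgroupClosure_le
      (by rintro x ⟨g, hg, rfl⟩; exact hDsub g hg) hDclosed
    suffices h : Mo ≤ N from le_trans h hND
    -- conjugation stability of N under the range of ρ
    have hconjN : ∀ b ∈ ρ.range, ∀ n ∈ N, b⁻¹ * n * b ∈ N := by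
      rintro b ⟨h, rfl⟩ n hn
      have hHb : N ≤ Subgroup.comap (MulAut.conj (ρ h)⁻¹).toMonoidHom N := by
        refine zarSubgroupClosure_le ?_ ?_
        · rintro x ⟨g, hg, rfl⟩
          rw [SetLike.mem_coe, Subgroup.mem_comap]
          show (ρ h)⁻¹ * ρ g * ((ρ h)⁻¹)⁻¹ ∈ N
          rw [inv_inv]
          have hmem : h⁻¹ * g * h ∈ G' := by
            rw [hG'def, Subgroup.mem_comap]
            have h1 : (ρ h)⁻¹ * (ρ g) * ((ρ h)⁻¹)⁻¹ ∈ Mo := by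
              refine hMoNormal (ρ h)⁻¹ (M.inv_mem (hrange ⟨h, rfl⟩)) (ρ g) (hρG' g hg)
            rw [inv_inv] at h1
            have : ρ (h⁻¹ * g * h) = (ρ h)⁻¹ * ρ g * ρ h := by
              rw [map_mul, map_mul, map_inv]
            rwa [this]
          have : (ρ h)⁻¹ * ρ g * ρ h = ρ (h⁻¹ * g * h) := by
            rw [map_mul, map_mul, map_inv]
          rw [this]
          exact hS'N ⟨h⁻¹ * g * h, hmem, rfl⟩
        · have hset : ((Subgroup.comap (MulAut.conj (ρ h)⁻¹).toMonoidHom N :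
              Subgroup (V ≃ₗ[K] V)) : Set (V ≃ₗ[K] V))
              = {x : V ≃ₗ[K] V | (ρ h)⁻¹ * x * (ρ h) ∈ (N : Set (V ≃ₗ[K] V))} := by
            ext x
            rw [SetLike.mem_coe, Subgroup.mem_comap]
            show (ρ h)⁻¹ * x * ((ρ h)⁻¹)⁻¹ ∈ N ↔ _
            rw [inv_inv]
            rfl
          rw [hset]
          exact IsZarClosed.conj hNclosed (ρ h)
      have := hHb hn
      rw [Subgroup.mem_comap] at this
      show (ρ h)⁻¹ * n * ρ h ∈ N
      have h2 : (ρ h)⁻¹ * n * ((ρ h)⁻¹)⁻¹ ∈ N := this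
      rwa [inv_inv] at h2
    have hMoRangeN : ∀ x : V ≃ₗ[K] V, x ∈ Mo → x ∈ ρ.range → x ∈ N := by
      rintro x hxMo ⟨g, rfl⟩
      exact hS'N ⟨g, show g ∈ G' from Subgroup.mem_comap.mpr hxMo, rfl⟩
    set A : Subgroup (V ≃ₗ[K] V) := ρ.range with hAdef
    haveI hBA : (Mo.subgroupOf A).FiniteIndex := by
      refine ⟨?_⟩
      show Mo.relIndex A ≠ 0
      intro h0
      exact hMoFI.index_ne_zero (Subgroup.relIndex_eq_zero_of_le_right hrange h0)
    haveI : Finite (↥A ⧸ Mo.subgroupOf A) := Subgroup.finite_quotient_of_finiteIndex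
    set rfun : (↥A ⧸ Mo.subgroupOf A) → (V ≃ₗ[K] V) := fun q => ↑(q.out) with hrfundef
    have key1 : ∀ a : ↥A, (rfun (Quotient.mk'' a))⁻¹ * ↑a ∈ N := by
      intro a
      have hrel : (Quotient.mk'' a : ↥A ⧸ Mo.subgroupOf A).out⁻¹ * a ∈ Mo.subgroupOf A :=
        QuotientGroup.leftRel_apply.mp (Quotient.exact' (Quotient.out_eq' (Quotient.mk'' a)))
      have h1 : (rfun (Quotient.mk'' a))⁻¹ * ↑a
          = ↑((Quotient.mk'' a : ↥A ⧸ Mo.subgroupOf A).out⁻¹ * a) := by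
        simp [hrfundef]
      rw [h1]
      exact hMoRangeN _ (Subgroup.mem_subgroupOf.mp hrel) (SetLike.coe_mem _)
    set P : Subgroup (V ≃ₗ[K] V) :=
      { carrier := {x | ∃ a, a ∈ A ∧ a⁻¹ * x ∈ N}
        one_mem' := ⟨1, A.one_mem, by simpa using N.one_mem⟩
        mul_mem' := by
          rintro x y ⟨a, ha, hn⟩ ⟨b, hb, hn'⟩
          refine ⟨a * b, A.mul_mem ha hb, ?_⟩
          have h1 : b⁻¹ * (a⁻¹ * x) * b ∈ N := hconjN b hb _ hn
          have h2 : (a * b)⁻¹ * (x * y) = (b⁻¹ * (a⁻¹ * x) * b) * (b⁻¹ * y) := by group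
          rw [h2]
          exact N.mul_mem h1 hn'
        inv_mem' := by
          rintro x ⟨a, ha, hn⟩
          refine ⟨a⁻¹, A.inv_mem ha, ?_⟩
          have h1 : (a⁻¹)⁻¹ * (a⁻¹ * x)⁻¹ * a⁻¹ ∈ N := hconjN a⁻¹ (A.inv_mem ha) _ (N.inv_mem hn)
          have h2 : (a⁻¹)⁻¹ * x⁻¹ = (a⁻¹)⁻¹ * (a⁻¹ * x)⁻¹ * a⁻¹ := by group
          rw [h2]
          exact h1 } with hPdef
    have hPset : ((P : Subgroup (V ≃ₗ[K] V)) : Set (V ≃ₗ[K] V))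
        = ⋃ q : (↥A ⧸ Mo.subgroupOf A), {x | (rfun q)⁻¹ * x ∈ (N : Set (V ≃ₗ[K] V))} := by
      ext x
      constructor
      · rintro ⟨a, ha, hn⟩
        refine Set.mem_iUnion.mpr ⟨Quotient.mk'' ⟨a, ha⟩, ?_⟩
        have h1 := key1 ⟨a, ha⟩
        show (rfun (Quotient.mk'' ⟨a, ha⟩))⁻¹ * x ∈ N
        have h2 : (rfun (Quotient.mk'' ⟨a, ha⟩))⁻¹ * x
            = ((rfun (Quotient.mk'' ⟨a, ha⟩))⁻¹ * a) * (a⁻¹ * x) := by group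
        rw [h2]
        exact N.mul_mem h1 hn
      · intro hx
        obtain ⟨q, hq⟩ := Set.mem_iUnion.mp hx
        exact ⟨rfun q, SetLike.coe_mem q.out, hq⟩
    have hPclosed : IsZarClosed ((P : Subgroup (V ≃ₗ[K] V)) : Set (V ≃ₗ[K] V)) := by
      rw [hPset]
      exact IsZarClosed.iUnion_finite (fun q => IsZarClosed.leftCoset hNclosed (rfun q))
    have hMP : M ≤ P := by
      refine zarSubgroupClosure_le ?_ hPclosed
      rintro x ⟨g, rfl⟩
      exact ⟨ρ g, ⟨g, rfl⟩, by simpa using N.one_mem⟩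
    have hNM : N ≤ M := le_trans hNMo hMoM
    have hNFI : (N.subgroupOf M).FiniteIndex := by
      refine finiteIndex_of_cover (N.subgroupOf M)
        (fun q : (↥A ⧸ Mo.subgroupOf A) => (⟨rfun q, hrange (SetLike.coe_mem q.out)⟩ : ↥M)) ?_
      intro x
      have hxP : (↑x : V ≃ₗ[K] V) ∈ ((P : Subgroup (V ≃ₗ[K] V)) : Set (V ≃ₗ[K] V)) :=
        hMP x.2
      rw [hPset] at hxP
      obtain ⟨q, hq⟩ := Set.mem_iUnion.mp hxP
      refine ⟨q, ?_⟩
      rw [Subgroup.mem_subgroupOf]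
      have : (↑((⟨rfun q, hrange (SetLike.coe_mem q.out)⟩ : ↥M)⁻¹ * x) : V ≃ₗ[K] V)
          = (rfun q)⁻¹ * ↑x := by
        simp
      rw [this]
      exact hq
    exact hMo_le N ⟨hNM, hNclosed, hNFI⟩
  -- invariance transfer
  have hTransfer : ∀ p : Submodule K V, IsInvariantOn ρ G' p →
      ∀ n ∈ Mo, ∀ v ∈ p, n v ∈ p := by
    intro p hp n hn v hv
    have hsub : ∀ g ∈ G', ρ g ∈ stabSubgroup p := by
      intro g hg
      refine ⟨fun u hu => hp g hg u hu, fun u hu => ?_⟩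
      have : (ρ g)⁻¹ = ρ g⁻¹ := by rw [map_inv]
      rw [this]
      exact hp g⁻¹ (G'.inv_mem hg) u hu
    exact ((hF5 (stabSubgroup p) (isZarClosed_stabSubgroup p) hsub) hn).1 v hv
  constructor
  · -- Mo is a connected algebraic group
    refine ⟨hMoClosed, le_antisymm ?_ ?_⟩
    · refine identityComponent_le le_rfl hMoClosed ?_
      rw [Subgroup.subgroupOf_self]
      infer_instance
    · exact le_identityComponent (fun H h1 h2 h3 => hMoConn H h1 h2 h3)
  · -- no nontrivial connected closed normal abelian subgroup
    intro W hWMo hWclosed hWconn hWnormal hWab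
    -- usable connectedness for W
    have hWconn' : ∀ H : Subgroup (V ≃ₗ[K] V), H ≤ W →
        IsZarClosed (H : Set (V ≃ₗ[K] V)) → (H.subgroupOf W).FiniteIndex → W ≤ H := by
      intro H h1 h2 h3
      conv_lhs => rw [← hWconn]
      exact identityComponent_le h1 h2 h3
    -- V is spanned by submodules on which W acts by scalars
    set 𝒰 : Set (Submodule K V) :=
      {U | ∀ w ∈ W, ∃ c : K, ∀ v ∈ U, w v = c • v} with h𝒰def
    set S : Submodule K V := sSup 𝒰 with hSdef
    have hUconj : ∀ n ∈ Mo, ∀ U ∈ 𝒰, Submodule.map (n : V →ₗ[K] V) U ∈ 𝒰 := by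
      intro n hn U hU w hw
      have hwn : n⁻¹ * w * n ∈ W := by
        have := hWnormal n⁻¹ (Mo.inv_mem hn) w hw
        rwa [inv_inv] at this
      obtain ⟨c, hc⟩ := hU (n⁻¹ * w * n) hwn
      refine ⟨c, ?_⟩
      rintro v ⟨u, hu, rfl⟩
      have h1 : w (n u) = n ((n⁻¹ * w * n) u) := by
        rw [← mul_apply, ← mul_apply]
        congr 1
        group
      show w (n u) = c • n u
      rw [h1, hc u hu, map_smul]
    have hSMo : ∀ n ∈ Mo, ∀ v ∈ S, n v ∈ S := by
      intro n hn v hv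
      have hmap : Submodule.map (n : V →ₗ[K] V) S ≤ S := by
        conv_lhs => rw [hSdef, sSup_eq_iSup', Submodule.map_iSup]
        exact iSup_le (fun U => le_sSup (hUconj n hn ↑U U.2))
      exact hmap ⟨v, hv, rfl⟩
    have hSG' : IsInvariantOn ρ G' S := fun g hg v hv => hSMo (ρ g) (hρG' g hg) v hv
    obtain ⟨Q, hQinv, hQcompl⟩ := (hadm G' hG'FI).1 S hSG'
    have hStop : S = ⊤ := by
      by_cases hQbot : Q = ⊥
      · have := hQcompl.sup_eq_top
        rwa [hQbot, sup_bot_eq] at this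
      · exfalso
        have hQMo : ∀ n ∈ Mo, ∀ v ∈ Q, n v ∈ Q := hTransfer Q hQinv
        have hQW : ∀ w ∈ W, ∀ v ∈ Q, w v ∈ Q := fun w hw => hQMo w (hWMo hw)
        obtain ⟨U', hU'Q, hU'W, hU'0, hU'min⟩ := exists_minimal_submodule
          (fun U => ∀ w ∈ W, ∀ v ∈ U, w v ∈ U) Q hQW hQbot
        have hscal : U' ∈ 𝒰 := by
          intro w hw
          haveI : Nontrivial ↥U' := Submodule.nontrivial_iff_ne_bot.mpr hU'0
          set e : Module.End K ↥U' := (w : V →ₗ[K] V).restrict (hU'W w hw) with hedef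
          obtain ⟨c, hc⟩ := Module.End.exists_eigenvalue e
          obtain ⟨v₀, hv₀⟩ := hc.exists_hasEigenvector
          refine ⟨c, ?_⟩
          have h1 : eigOn w c U' ≠ ⊥ := by
            intro hb
            have hm : (↑v₀ : V) ∈ eigOn w c U' := by
              refine ⟨v₀.2, ?_⟩
              have h2 := hv₀.apply_eq_smul
              have hcoe : w ↑v₀ = ↑(e v₀) := rfl
              rw [hcoe, h2]
              rfl
            rw [hb] at hm
            exact hv₀.2 (Subtype.ext ((Submodule.mem_bot K).mp hm))
          have h2 : eigOn w c U' ≤ U' := fun v hv => hv.1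
          have h3 : ∀ w' ∈ W, ∀ v ∈ eigOn w c U', w' v ∈ eigOn w c U' := by
            rintro w' hw' v ⟨hv1, hv2⟩
            refine ⟨hU'W w' hw' v hv1, ?_⟩
            have hcomm : w (w' v) = w' (w v) := by
              rw [← mul_apply, ← mul_apply, hWab w hw w' hw']
            rw [hcomm, hv2, map_smul]
          have heq := hU'min (eigOn w c U') h2 h3 h1
          intro v hv
          have : v ∈ eigOn w c U' := by rw [heq]; exact hv
          exact this.2
        have hU'S : U' ≤ S := le_sSup hscal
        have hbot : U' ≤ ⊥ := by
          rw [← hQcompl.disjoint.eq_bot]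
          exact le_inf hU'S hU'Q
        exact hU'0 (le_bot_iff.mp hbot)
    -- the finite set of simultaneous eigenspaces
    set 𝒳 : Set (Submodule K V) :=
      {X | X ≠ ⊥ ∧ ∃ χ : (V ≃ₗ[K] V) → K, X = eigSubmodule W χ} with h𝒳def
    have h𝒳fin : 𝒳.Finite := eig_finite W
    haveI h𝒳finT : Finite ↥𝒳 := h𝒳fin.to_subtype
    have hmapmul : ∀ (g h : V ≃ₗ[K] V) (X : Submodule K V),
        Submodule.map ((g * h : V ≃ₗ[K] V) : V →ₗ[K] V) X
          = Submodule.map (g : V →ₗ[K] V) (Submodule.map (h : V →ₗ[K] V) X) := by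
      intro g h X
      rw [LinearEquiv.coe_toLinearMap_mul, Module.End.mul_eq_comp, Submodule.map_comp]
    have hmapX : ∀ n ∈ Mo, ∀ X ∈ 𝒳, Submodule.map (n : V →ₗ[K] V) X ∈ 𝒳 := by
      intro n hn X hX
      obtain ⟨hX0, χ, rfl⟩ := hX
      refine ⟨?_, fun w => χ (n⁻¹ * w * n), ?_⟩
      · intro hb
        apply hX0
        rw [eq_bot_iff]
        intro v hv
        have : n v ∈ Submodule.map (n : V →ₗ[K] V) (eigSubmodule W χ) := ⟨v, hv, rfl⟩
        rw [hb, Submodule.mem_bot] at this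
        exact (Submodule.mem_bot K).mpr (by
          have := (LinearEquiv.map_eq_zero_iff n).mp this
          exact this)
      · ext v
        simp only [Submodule.mem_map, mem_eigSubmodule_iff]
        constructor
        · rintro ⟨u, hu, rfl⟩ w hw
          have hwn : n⁻¹ * w * n ∈ W := by
            have := hWnormal n⁻¹ (Mo.inv_mem hn) w hw
            rwa [inv_inv] at this
          have h1 : w ((n : V →ₗ[K] V) u) = n ((n⁻¹ * w * n) u) := by
            show w (n u) = n ((n⁻¹ * w * n) u)
            rw [← mul_apply, ← mul_apply]
            congr 1
            group
          rw [h1, hu (n⁻¹ * w * n) hwn, map_smul]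
          rfl
        · intro hv
          refine ⟨n⁻¹ v, ?_, by show n (n⁻¹ v) = v; exact apply_inv_apply n v⟩
          intro w hw
          have hwn : n * w * n⁻¹ ∈ W := hWnormal n hn w hw
          have h2 := hv (n * w * n⁻¹) hwn
          have h3 : n⁻¹ * (n * w * n⁻¹) * n = w := by group
          rw [h3] at h2
          have h4 : w (n⁻¹ v) = n⁻¹ ((n * w * n⁻¹) v) := by
            rw [← mul_apply, ← mul_apply]
            congr 1
            group
          rw [h4, h2, map_smul]
    -- Mo stabilizes every simultaneous eigenspace
    set SA : Subgroup (V ≃ₗ[K] V) := ⨅ X ∈ 𝒳, stabSubgroup X with hSAdef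
    have hSAclosed : IsZarClosed ((SA : Subgroup (V ≃ₗ[K] V)) : Set (V ≃ₗ[K] V)) := by
      rw [hSAdef]
      exact isZarClosed_coe_iInf (fun X => isZarClosed_coe_iInf
        (fun hX => isZarClosed_stabSubgroup X))
    have hmemSA : ∀ g : V ≃ₗ[K] V,
        g ∈ SA ↔ ∀ X ∈ 𝒳, Submodule.map (g : V →ₗ[K] V) X = X := by
      intro g
      rw [hSAdef]
      simp only [Subgroup.mem_iInf]
      exact forall_congr' (fun X => forall_congr' (fun hX => mem_stabSubgroup_iff_map))
    have hSAFI : (SA.subgroupOf Mo).FiniteIndex := by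
      haveI : Finite (↥𝒳 → ↥𝒳) := inferInstance
      refine finiteIndex_of_separating (SA.subgroupOf Mo)
        (fun n : ↥Mo => fun X : ↥𝒳 =>
          (⟨Submodule.map ((↑n : V ≃ₗ[K] V) : V →ₗ[K] V) ↑X, hmapX ↑n n.2 ↑X X.2⟩ : ↥𝒳)) ?_
      intro a b
      rw [Subgroup.mem_subgroupOf]
      constructor
      · intro hab
        have hab' := (hmemSA _).mp hab
        funext X
        apply Subtype.ext
        show Submodule.map ((↑a : V ≃ₗ[K] V) : V →ₗ[K] V) ↑X
          = Submodule.map ((↑b : V ≃ₗ[K] V) : V →ₗ[K] V) ↑X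
        have h1 : (↑(a⁻¹ * b) : V ≃ₗ[K] V) = (↑a)⁻¹ * ↑b := rfl
        have h2 := hab' ↑X X.2
        rw [h1] at h2
        calc Submodule.map ((↑a : V ≃ₗ[K] V) : V →ₗ[K] V) ↑X
            = Submodule.map ((↑a : V ≃ₗ[K] V) : V →ₗ[K] V)
                (Submodule.map (((↑a)⁻¹ * ↑b : V ≃ₗ[K] V) : V →ₗ[K] V) ↑X) := by rw [h2]
          _ = Submodule.map ((↑a * ((↑a)⁻¹ * ↑b) : V ≃ₗ[K] V) : V →ₗ[K] V) ↑X :=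
              (hmapmul _ _ _).symm
          _ = Submodule.map ((↑b : V ≃ₗ[K] V) : V →ₗ[K] V) ↑X := by
              rw [show (↑a * ((↑a)⁻¹ * ↑b) : V ≃ₗ[K] V) = ↑b by group]
      · intro hab
        rw [hmemSA]
        intro X hX
        have h2 : Submodule.map ((↑a : V ≃ₗ[K] V) : V →ₗ[K] V) X
            = Submodule.map ((↑b : V ≃ₗ[K] V) : V →ₗ[K] V) X := by
          have := congrFun hab ⟨X, hX⟩
          exact congrArg Subtype.val this
        have h1 : (↑(a⁻¹ * b) : V ≃ₗ[K] V) = (↑a)⁻¹ * ↑b := rfl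
        rw [h1]
        calc Submodule.map (((↑a)⁻¹ * ↑b : V ≃ₗ[K] V) : V →ₗ[K] V) X
            = Submodule.map (((↑a)⁻¹ : V ≃ₗ[K] V) : V →ₗ[K] V)
                (Submodule.map ((↑b : V ≃ₗ[K] V) : V →ₗ[K] V) X) := hmapmul _ _ _
          _ = Submodule.map (((↑a)⁻¹ : V ≃ₗ[K] V) : V →ₗ[K] V)
                (Submodule.map ((↑a : V ≃ₗ[K] V) : V →ₗ[K] V) X) := by rw [h2]
          _ = Submodule.map ((((↑a)⁻¹ * ↑a) : V ≃ₗ[K] V) : V →ₗ[K] V) X :=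
              (hmapmul _ _ _).symm
          _ = X := by
              rw [inv_mul_cancel]
              ext v
              simp only [Submodule.mem_map]
              constructor
              · rintro ⟨u, hu, rfl⟩
                have : ((1 : V ≃ₗ[K] V) : V →ₗ[K] V) u = u := rfl
                rwa [this]
              · intro hv
                exact ⟨v, hv, rfl⟩
    have hMoStab : ∀ X ∈ 𝒳, ∀ n ∈ Mo, Submodule.map (n : V →ₗ[K] V) X = X := by
      have hle : Mo ≤ SA ⊓ Mo := by
        refine hMoConn (SA ⊓ Mo) inf_le_right ?_ ?_
        · rw [Subgroup.coe_inf]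
          exact IsZarClosed.inter hSAclosed hMoClosed
        · rw [Subgroup.inf_subgroupOf_right]
          exact hSAFI
      intro X hX n hn
      exact (hmemSA n).mp ((hle hn).1) X hX
    -- every simultaneous eigenspace is fixed pointwise by W
    have hXfix : ∀ X ∈ 𝒳, ∀ w ∈ W, ∀ v ∈ X, w v = v := by
      intro X hX
      have hX' := hX
      obtain ⟨hX0, χ, hXeq⟩ := hX
      have hXinv : IsInvariantOn ρ G' X := by
        intro g hg v hv
        have h1 := hMoStab X hX' (ρ g) (hρG' g hg)
        rw [← h1]
        exact ⟨v, hv, rfl⟩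
      obtain ⟨p, hpX, hpinv, hp0, hpmin⟩ :=
        exists_minimal_submodule (IsInvariantOn ρ G') X hXinv hX0
      have hpsimple : IsSimpleOn ρ G' p := by
        refine ⟨hpinv, hp0, fun q hq hqinv => ?_⟩
        by_cases hqb : q = ⊥
        · exact Or.inl hqb
        · exact Or.inr (hpmin q hq hqinv hqb)
      obtain ⟨m, hm0, hdet⟩ := (hadm G' hG'FI).2 p hpsimple
      obtain ⟨q0, hq0⟩ := Submodule.exists_isCompl p
      set π : V →ₗ[K] ↥p := p.projectionOnto q0 hq0 with hπdef
      have hπ : ∀ v ∈ p, ↑(π v) = v := by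
        intro v hv
        rw [show v = ↑(⟨v, hv⟩ : ↥p) from rfl, hπdef,
          Submodule.projectionOnto_apply_left hq0]
      have hDsub : ∀ g ∈ G', ρ g ∈ detSubgroup p π hπ m := by
        intro g hg
        have hstab : ρ g ∈ stabSubgroup p := by
          refine ⟨fun v hv => hpinv g hg v hv, fun v hv => ?_⟩
          rw [show (ρ g)⁻¹ = ρ g⁻¹ by rw [map_inv]]
          exact hpinv g⁻¹ (G'.inv_mem hg) v hv
        refine ⟨hstab, ?_⟩
        have h1 := hdet g hg (fun v hv => hpinv g hg v hv)
        rwa [det_restrict_eq p π hπ (ρ g) _] at h1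
      have hWD : ∀ w ∈ W, w ∈ detSubgroup p π hπ m := fun w hw =>
        hF5 (detSubgroup p π hπ m) (isZarClosed_detSubgroup p π hπ m) hDsub (hWMo hw)
      have hchar : ∀ w ∈ W, ∀ v ∈ X, w v = χ w • v := by
        intro w hw v hv
        rw [hXeq] at hv
        exact hv w hw
      set r : ℕ := Module.finrank K ↥p * m with hrdef
      have hr0 : 0 < r := by
        haveI : Nontrivial ↥p := Submodule.nontrivial_iff_ne_bot.mpr hp0
        exact mul_pos Module.finrank_pos hm0
      have hχr : ∀ w ∈ W, χ w ^ r = 1 := by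
        intro w hw
        have h1 := (hWD w hw).2
        have h2 : detFun p π (jmap w) = χ w ^ Module.finrank K ↥p :=
          detFun_of_scalar p π hπ w (χ w) (fun v hv => hchar w hw v (hpX hv))
        rw [h2, ← pow_mul] at h1
        exact h1
      obtain ⟨v₀, hv₀X, hv₀0⟩ := Submodule.exists_mem_ne_zero_of_ne_bot hX0
      have hsmulcancel : ∀ c d : K, c • v₀ = d • v₀ → c = d := by
        intro c d hcd
        have : (c - d) • v₀ = 0 := by rw [sub_smul, hcd, sub_self]
        rcases smul_eq_zero.mp this with h | h
        · exact sub_eq_zero.mp h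
        · exact absurd h hv₀0
      have hχinv : ∀ w ∈ W, χ w⁻¹ * χ w = 1 := by
        intro w hw
        have h1 : (w⁻¹ * w) v₀ = v₀ := by rw [inv_mul_cancel]; rfl
        have h2 : (w⁻¹ * w) v₀ = (χ w⁻¹ * χ w) • v₀ := by
          rw [mul_apply, hchar w hw v₀ hv₀X, map_smul,
            hchar w⁻¹ (W.inv_mem hw) v₀ hv₀X, smul_smul, mul_comm]
        rw [h1] at h2
        exact (hsmulcancel 1 (χ w⁻¹ * χ w) (by rw [one_smul]; exact h2)).symm
      -- the kernel of χ on W is closed of finite index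
      haveI hfinroot : Finite {x : K | x ^ r = 1} := (finite_pow_eq_one r hr0).to_subtype
      have hKXFI : ((fixSubgroup (X : Set V)).subgroupOf W).FiniteIndex := by
        refine finiteIndex_of_separating ((fixSubgroup (X : Set V)).subgroupOf W)
          (fun w : ↥W => (⟨χ ↑w, hχr ↑w w.2⟩ : {x : K | x ^ r = 1})) ?_
        intro a b
        rw [Subgroup.mem_subgroupOf]
        constructor
        · intro hab
          apply Subtype.ext
          show χ ↑a = χ ↑b
          have h1 : (↑(a⁻¹ * b) : V ≃ₗ[K] V) v₀ = v₀ := hab v₀ hv₀X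
          have h2 : (↑b : V ≃ₗ[K] V) v₀ = ((↑a : V ≃ₗ[K] V)) ((↑(a⁻¹ * b) : V ≃ₗ[K] V) v₀) := by
            rw [show (↑(a⁻¹ * b) : V ≃ₗ[K] V) = (↑a)⁻¹ * ↑b from rfl]
            rw [← mul_apply]
            congr 1
            group
          rw [h1] at h2
          have h3 : χ (↑b) • v₀ = χ (↑a) • v₀ := by
            rw [← hchar ↑b b.2 v₀ hv₀X, ← hchar ↑a a.2 v₀ hv₀X]
            exact h2
          exact (hsmulcancel _ _ h3).symm
        · intro hab
          have hχab : χ ↑a = χ ↑b := Subtype.ext_iff.mp hab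
          intro v hv
          have hainv : ((↑a : V ≃ₗ[K] V))⁻¹ ∈ W := W.inv_mem a.2
          have e1 : (↑(a⁻¹ * b) : V ≃ₗ[K] V) v = ((↑a : V ≃ₗ[K] V))⁻¹ ((↑b : V ≃ₗ[K] V) v) := by
            rw [show (↑(a⁻¹ * b) : V ≃ₗ[K] V) = (↑a)⁻¹ * ↑b from rfl, mul_apply]
          rw [e1, hchar ↑b b.2 v hv, map_smul, hchar ((↑a : V ≃ₗ[K] V))⁻¹ hainv v hv,
            smul_smul, ← hχab, mul_comm, hχinv ↑a a.2, one_smul]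
      have hWfix : W ≤ fixSubgroup (X : Set V) ⊓ W := by
        refine hWconn' _ inf_le_right ?_ ?_
        · rw [Subgroup.coe_inf]
          exact IsZarClosed.inter (isZarClosed_fixSubgroup _) hWclosed
        · rw [Subgroup.inf_subgroupOf_right]
          exact hKXFI
      intro w hw v hv
      exact ((hWfix hw).1) v hv
    -- conclude: W is trivial
    rw [Subgroup.eq_bot_iff_forall]
    intro w hw
    have hfix : ∀ v : V, w v = v := by
      intro v
      have hvS : v ∈ S := by rw [hStop]; trivial
      have hle : S ≤ fixedSubmodule w := by
        rw [hSdef]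
        apply sSup_le
        intro U hU
        by_cases hU0 : U = ⊥
        · rw [hU0]; exact bot_le
        · have hU' : ∀ w' ∈ W, ∃ c : K, ∀ v ∈ U, w' v = c • v := hU
          set χU : (V ≃ₗ[K] V) → K :=
            fun g => if h : g ∈ W then (hU' g h).choose else 1 with hχUdef
          have hχU : ∀ w' ∈ W, ∀ u ∈ U, w' u = χU w' • u := by
            intro w' hw' u hu
            rw [hχUdef]
            simp only [dif_pos hw']
            exact (hU' w' hw').choose_spec u hu
          have hUle : U ≤ eigSubmodule W χU := fun u hu w' hw' => hχU w' hw' u hu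
          have hX𝒳 : eigSubmodule W χU ∈ 𝒳 := by
            refine ⟨?_, χU, rfl⟩
            intro hb
            exact hU0 (le_bot_iff.mp (hb ▸ hUle))
          intro u hu
          show w u = u
          exact hXfix _ hX𝒳 w hw u (hUle hu)
      exact hle hvS
    have : w = 1 := by
      apply LinearEquiv.toLinearMap_injective
      apply LinearMap.ext
      intro v
      exact hfix v
    exact this
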